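/- arXiv:0811.2439 — 5 statements merged into one kernel-verified Lean document; each statement's English description precedes it below -/
import Mathlib

section
/- Let k be an algebraically closed field and S a k-algebra with a complete set of orthogonal idempotents L. If e ∈ L and the corner ring eSe is commutative, then for every simple left S-module V (which is finite-dimensional over k, or on which Schur's lemma gives End_S(V) = k), the k-dimension of eV is at most 1. -/
/-- Two-element Jacobson density: if `x ≠ 0` and `y` is not a `k`-multiple of `x`
in a simple `S`-module with scalar endomorphisms, then we can send `x` to `0`
and `y` anywhere. -/
theorem density_two {k : Type*} [Field k]
    {S : Type*} [Ring S] [Algebra k S]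
    {V : Type*} [AddCommGroup V] [Module S V] [Module k V] [IsScalarTower k S V]
    (hV : IsSimpleModule S V)
    (hSchur : ∀ f : V →ₗ[S] V, ∃ c : k, ∀ v : V, f v = c • v)
    (x y : V) (hx : x ≠ 0) (hy : ∀ c : k, y ≠ c • x) (u : V) :
    ∃ s : S, s • x = 0 ∧ s • y = u := by
  set N : Submodule S V :=
    { carrier := {z | ∃ s : S, s • x = 0 ∧ s • y = z}
      add_mem' := by
        rintro a b ⟨s, hs, rfl⟩ ⟨t, ht, rfl⟩
        exact ⟨s + t, by simp [add_smul, hs, ht], by simp [add_smul]⟩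
      zero_mem' := ⟨0, by simp, by simp⟩
      smul_mem' := by
        rintro r a ⟨s, hs, rfl⟩
        exact ⟨r * s, by simp [mul_smul, hs], by simp [mul_smul]⟩ } with hNdef
  rcases eq_bot_or_eq_top N with hN | hN
  · exfalso
    have hker : ∀ s : S, s • x = 0 → s • y = 0 := by
      intro s hs
      have : (s • y) ∈ N := ⟨s, hs, rfl⟩
      rwa [hN, Submodule.mem_bot] at this
    have hsurj := IsSimpleModule.toSpanSingleton_surjective S (hm := hx)
    choose g hg using hsurj
    simp only [LinearMap.toSpanSingleton_apply] at hg
    obtain ⟨c, hc⟩ := hSchur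
      { toFun := fun z => g z • y
        map_add' := by
          intro a b
          have h0 : (g (a + b) - g a - g b) • x = 0 := by
            simp [sub_smul, hg]
          have := hker _ h0
          rw [sub_smul, sub_smul, sub_sub, sub_eq_zero] at this
          exact this
        map_smul' := by
          intro r a
          have h0 : (g (r • a) - r * g a) • x = 0 := by
            simp [sub_smul, mul_smul, hg]
          have := hker _ h0
          simp only [sub_smul, mul_smul] at this
          simpa using sub_eq_zero.mp this }
    have hcx := hc x
    simp only [LinearMap.coe_mk, AddHom.coe_mk] at hcx
    have h0 : (g x - 1) • x = 0 := by simp [sub_smul, hg]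
    have hgy := hker _ h0
    rw [sub_smul, one_smul, sub_eq_zero] at hgy
    exact hy c (by rw [← hcx, hgy])
  · have : u ∈ N := hN ▸ Submodule.mem_top
    exact this

/-- Let `k` be an algebraically closed field and `S` a `k`-algebra with a
complete set of orthogonal idempotents `L`.  If `e ∈ L` and the corner ring `eSe` is
commutative, then for every simple left `S`-module `V` on which Schur's lemma gives
`End_S(V) = k` (e.g. `V` finite dimensional over `k`), the `k`-dimension of `eV` is at
most `1`, i.e. any two elements of `eV` are `k`-linearly dependent. -/
theorem stmt1 {k : Type*} [Field k] [IsAlgClosed k]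
    {S : Type*} [Ring S] [Algebra k S]
    {V : Type*} [AddCommGroup V] [Module S V] [Module k V] [IsScalarTower k S V]
    (L : Finset S)
    (hidem : ∀ e ∈ L, IsIdempotentElem e)
    (horth : ∀ e ∈ L, ∀ f ∈ L, e ≠ f → e * f = 0)
    (hsum : ∑ e ∈ L, e = 1)
    (e : S) (he : e ∈ L)
    (hcomm : ∀ s t : S, (e * s * e) * (e * t * e) = (e * t * e) * (e * s * e))
    (hV : IsSimpleModule S V)
    (hSchur : ∀ f : V →ₗ[S] V, ∃ c : k, ∀ v : V, f v = c • v) :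
    ∀ v w : V, ∃ c d : k, (c ≠ 0 ∨ d ≠ 0) ∧ c • (e • v) + d • (e • w) = 0 := by
  intro v w
  set x := e • v with hxdef
  set y := e • w with hydef
  have hee : e * e = e := hidem e he
  have hex : e • x = x := by rw [hxdef, ← mul_smul, hee]
  have hey : e • y = y := by rw [hydef, ← mul_smul, hee]
  by_cases hx : x = 0
  · exact ⟨1, 0, Or.inl one_ne_zero, by simp [hx]⟩
  by_cases hy : ∃ c : k, y = c • x
  · obtain ⟨c, hc⟩ := hy
    exact ⟨c, -1, Or.inr (by norm_num), by
      rw [hc, neg_smul, one_smul, add_neg_cancel]⟩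
  push_neg at hy
  exfalso
  -- x, y are k-independent; use density twice to contradict commutativity of eSe
  obtain ⟨s, hs1, hs2⟩ := density_two hV hSchur x y hx hy x
  have hy0 : y ≠ 0 := fun h => hy 0 (by simp [h])
  have hxy : ∀ c : k, x ≠ c • y := by
    intro c hc
    rcases eq_or_ne c 0 with rfl | hc0
    · exact hx (by simpa using hc)
    · exact hy c⁻¹ (by rw [hc, smul_smul, inv_mul_cancel₀ hc0, one_smul])
  obtain ⟨t, ht1, ht2⟩ := density_two hV hSchur y x hy0 hxy y
  have hax : (e * s * e) • x = 0 := by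
    rw [mul_smul, mul_smul, hex, hs1, smul_zero]
  have hay : (e * s * e) • y = x := by
    rw [mul_smul, mul_smul, hey, hs2, hex]
  have hbx : (e * t * e) • x = y := by
    rw [mul_smul, mul_smul, hex, ht2, hey]
  have h1 : ((e * s * e) * (e * t * e)) • x = x := by
    rw [mul_smul, hbx, hay]
  have h2 : ((e * t * e) * (e * s * e)) • x = 0 := by
    rw [mul_smul, hax, smul_zero]
  rw [hcomm s t, h2] at h1
  exact hx h1.symm
end

section
/- Let A be a k-algebra with an impression (τ, B) such that A is a finitely generated module over its center. If B is a prime ring (an integral domain), then A is a prime ring and the center Z(A) is an integral domain. -/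
/-- The Zariski topology on the maximal spectrum, induced from the prime spectrum. -/
noncomputable def maxSpecTopology (B : Type*) [CommRing B] :
    TopologicalSpace (MaximalSpectrum B) :=
  TopologicalSpace.induced MaximalSpectrum.toPrimeSpectrum inferInstance

/-- Let `A` be a `k`-algebra with an impression `(τ, B)` (an injective
algebra homomorphism `τ : A → M_d(B)` into matrices over a finitely generated commutative
`k`-algebra `B`, whose reductions modulo `m` are simple representations for all `m` in a
dense open subset of `Max B`), and suppose `A` is a finitely generated module over its
center.  If `B` is a prime ring (an integral domain), then `A` is a prime ring
(`a r b = 0` for all `r` implies `a = 0` or `b = 0`) and the center `Z(A)` is an integral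
domain. -/
theorem stmt3 {k : Type*} [Field k] [IsAlgClosed k]
    {A : Type} [Ring A] [Algebra k A] [Algebra.FiniteType k A]
    {B : Type*} [CommRing B] [Algebra k B] [Algebra.FiniteType k B] [IsDomain B]
    {d : ℕ} (hd : 0 < d)
    (τ : A →ₐ[k] Matrix (Fin d) (Fin d) B)
    (hinj : Function.Injective τ)
    (U : Set (MaximalSpectrum B))
    (hUopen : @IsOpen _ (maxSpecTopology B) U)
    (hUdense : @Dense _ (maxSpecTopology B) U)
    (hUsimple : ∀ m ∈ U,
      (∀ W : AddSubgroup (Fin d → B ⧸ m.asIdeal),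
        (∀ (a : A) (v : Fin d → B ⧸ m.asIdeal), v ∈ W →
          ((τ a).map (Ideal.Quotient.mk m.asIdeal)).mulVec v ∈ W) →
        W = ⊥ ∨ W = ⊤))
    (hfin : Module.Finite (Subalgebra.center k A) A) :
    (∀ a b : A, (∀ r : A, a * r * b = 0) → a = 0 ∨ b = 0) ∧
      (∀ a b : Subalgebra.center k A, a * b = 0 → a = 0 ∨ b = 0) := by
  letI : TopologicalSpace (MaximalSpectrum B) := maxSpecTopology B
  have key : ∀ a b : A, (∀ r : A, a * r * b = 0) → a = 0 ∨ b = 0 := by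
    intro a b hab
    by_contra h
    push_neg at h
    obtain ⟨ha, hb⟩ := h
    -- τ a and τ b are nonzero matrices
    have hτa : τ a ≠ 0 := fun h0 => ha (hinj (by simpa using h0))
    have hτb : τ b ≠ 0 := fun h0 => hb (hinj (by simpa using h0))
    obtain ⟨i, j, hij⟩ : ∃ i j, τ a i j ≠ 0 := by
      by_contra h0; push_neg at h0
      exact hτa (Matrix.ext fun i j => h0 i j)
    obtain ⟨i', j', hij'⟩ : ∃ i j, τ b i j ≠ 0 := by
      by_contra h0; push_neg at h0
      exact hτb (Matrix.ext fun i j => h0 i j)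
    set x := τ a i j
    set y := τ b i' j'
    have hxy : x * y ≠ 0 := mul_ne_zero hij hij'
    -- B is a Jacobson ring, so there is a maximal ideal avoiding x*y
    have hJ : IsJacobsonRing B := isJacobsonRing_of_finiteType (A := k)
    have hbot : (⊥ : Ideal B).jacobson = ⊥ :=
      hJ.out (by simpa using (Ideal.bot_prime (α := B)).isRadical)
    have hnotmem : x * y ∉ (⊥ : Ideal B).jacobson := by
      rw [hbot]; simpa using hxy
    rw [Ideal.jacobson, Ideal.mem_sInf] at hnotmem
    push_neg at hnotmem
    obtain ⟨J, ⟨-, hJmax⟩, hxyJ⟩ := hnotmem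
    -- the basic open set D(x*y) in MaxSpec is open and nonempty
    let D : Set (MaximalSpectrum B) := {m | x * y ∉ m.asIdeal}
    have hDopen : @IsOpen _ (maxSpecTopology B) D := by
      refine ⟨(PrimeSpectrum.basicOpen (x * y) : Set (PrimeSpectrum B)), ?_, rfl⟩
      exact (PrimeSpectrum.basicOpen (x * y)).isOpen
    have hDne : D.Nonempty := ⟨⟨J, hJmax⟩, hxyJ⟩
    -- density gives a point of U in D
    obtain ⟨m, hmD, hmU⟩ := hUdense.inter_open_nonempty D hDopen hDne
    have hxm : x ∉ m.asIdeal := fun hx => hmD (Ideal.mul_mem_right y _ hx)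
    have hym : y ∉ m.asIdeal := fun hy => hmD (Ideal.mul_mem_left _ x hy)
    -- work modulo m
    set mk := Ideal.Quotient.mk m.asIdeal with hmk
    have hmapmul : ∀ r s : A,
        ((τ r).map mk) * ((τ s).map mk) = (τ (r * s)).map mk := by
      intro r s
      rw [map_mul, Matrix.map_mul]
    -- nonzero vector in the image of τ_m b
    set v₀ : Fin d → B ⧸ m.asIdeal := Pi.single j' 1 with hv₀
    set w₀ : Fin d → B ⧸ m.asIdeal := ((τ b).map mk).mulVec v₀ with hw₀
    have hw₀ne : w₀ ≠ 0 := by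
      intro h0
      have : ((τ b).map mk) i' j' = 0 := by
        have := congrFun h0 i'
        simpa [hw₀, hv₀, Matrix.mulVec_single] using this
      exact hym (by simpa [Ideal.Quotient.eq_zero_iff_mem, hmk] using this)
    -- the cyclic A-submodule generated by w₀
    let W : AddSubgroup (Fin d → B ⧸ m.asIdeal) :=
      { carrier := Set.range fun r : A => ((τ r).map mk).mulVec w₀
        zero_mem' := ⟨0, by simp⟩
        add_mem' := by
          rintro _ _ ⟨r, rfl⟩ ⟨s, rfl⟩
          exact ⟨r + s, by
            show ((τ (r + s)).map ⇑mk).mulVec w₀ = ((τ r).map ⇑mk).mulVec w₀ + ((τ s).map ⇑mk).mulVec w₀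
            rw [map_add, Matrix.map_add _ (fun a b => map_add mk a b), Matrix.add_mulVec]⟩
        neg_mem' := by
          rintro _ ⟨r, rfl⟩
          exact ⟨-r, by
            show ((τ (-r)).map ⇑mk).mulVec w₀ = -((τ r).map ⇑mk).mulVec w₀
            rw [map_neg]
            have : ((-τ r).map ⇑mk) = -((τ r).map ⇑mk) := by
              ext u v; simp [Matrix.map_apply]
            rw [this, Matrix.neg_mulVec]⟩ }
    have hWstab : ∀ (c : A) (v : Fin d → B ⧸ m.asIdeal), v ∈ W →
        ((τ c).map mk).mulVec v ∈ W := by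
      rintro c _ ⟨r, rfl⟩
      exact ⟨c * r, by rw [Matrix.mulVec_mulVec, hmapmul]⟩
    have hWtop : W = ⊤ := by
      rcases hUsimple m hmU W hWstab with hW | hW
      · exfalso
        have : w₀ ∈ W := ⟨1, by simp⟩
        rw [hW, AddSubgroup.mem_bot] at this
        exact hw₀ne this
      · exact hW
    -- now derive the contradiction with τ_m a ≠ 0
    have hu : (Pi.single j (1 : B ⧸ m.asIdeal)) ∈ W := by
      rw [hWtop]; trivial
    obtain ⟨r, hr⟩ := hu
    have hcalc : ((τ a).map mk).mulVec (Pi.single j (1 : B ⧸ m.asIdeal)) = 0 := by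
      rw [← hr, Matrix.mulVec_mulVec, hmapmul, hw₀, Matrix.mulVec_mulVec, hmapmul, hab r, map_zero]
      simp
    have : ((τ a).map mk) i j = 0 := by
      have := congrFun hcalc i
      simpa [Matrix.mulVec_single] using this
    exact hxm (by simpa [Ideal.Quotient.eq_zero_iff_mem, hmk] using this)
  refine ⟨key, fun a b hab => ?_⟩
  have : (a : A) = 0 ∨ (b : A) = 0 := by
    apply key
    intro r
    have hc := a.2
    rw [Subalgebra.mem_center_iff] at hc
    calc (a : A) * r * (b : A) = r * (a : A) * (b : A) := by rw [hc r]
    _ = r * ((a : A) * (b : A)) := by rw [mul_assoc]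
    _ = 0 := by rw [← Subalgebra.coe_mul, hab]; simp
  rcases this with h | h
  · exact Or.inl (Subtype.ext h)
  · exact Or.inr (Subtype.ext h)
end

section
/- Let A be a prime quiver algebra with finite vertex set, satisfying e_i A e_i = Z e_i for each vertex i, where Z is the center of A. If a ∈ e_i A and b ∈ A e_i are both nonzero, then the product b a is nonzero. -/
/-- Let `A` be a prime quiver algebra (over a field `k`) with a finite
complete set of orthogonal vertex idempotents `e i`, satisfying `e_i A e_i = Z e_i` for
each vertex `i`, where `Z` is the center of `A`.  If `a ∈ e_i A` and `b ∈ A e_i` are both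
nonzero, then the product `b * a` is nonzero. -/
theorem stmt5 {k : Type*} [Field k] {A : Type*} [Ring A] [Algebra k A]
    {I : Type*} [Fintype I]
    (e : I → A)
    (hidem : ∀ i, IsIdempotentElem (e i))
    (horth : ∀ i j, i ≠ j → e i * e j = 0)
    (hsum : ∑ i, e i = 1)
    -- the corner ring condition `e_i A e_i = Z e_i`:
    (hcorner : ∀ (i : I) (x : A),
      ∃ z ∈ Subalgebra.center k A, e i * x * e i = z * e i)
    -- `A` is prime:
    (hprime : ∀ a b : A, (∀ r : A, a * r * b = 0) → a = 0 ∨ b = 0)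
    (i : I) (a b : A)
    (ha : e i * a = a) (hb : b * e i = b)
    (ha0 : a ≠ 0) (hb0 : b ≠ 0) :
    b * a ≠ 0 := by
  intro h
  -- Key: a * r * b = 0 for all r.
  have key : ∀ r : A, a * r * b = 0 := by
    intro r
    obtain ⟨z, hz, hzeq⟩ := hcorner i (a * r * b)
    have hzc : ∀ g : A, g * z = z * g := Subalgebra.mem_center_iff.mp hz
    have harb : a * r * b = z * e i := by
      have h1 : e i * (a * r * b) * e i = a * r * b := by
        conv_rhs => rw [← ha, ← hb]
        noncomm_ring
      rw [← h1, hzeq]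
    have hsq : z * z * e i = 0 := by
      have h2 : (a * r * b) * (a * r * b) = 0 := by
        have h3 : (a * r * b) * (a * r * b) = a * r * (b * a) * (r * b) := by
          noncomm_ring
        rw [h3, h, mul_zero, zero_mul]
      calc z * z * e i = z * z * (e i * e i) := by rw [hidem i]
        _ = z * (z * e i) * e i := by noncomm_ring
        _ = z * (e i * z) * e i := by rw [hzc]
        _ = (z * e i) * (z * e i) := by noncomm_ring
        _ = 0 := by rw [← harb, h2]
    have hall : ∀ s : A, (z * e i) * s * (z * e i) = 0 := by
      intro s
      obtain ⟨w, hw, hweq⟩ := hcorner i s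
      have hwc : ∀ g : A, g * w = w * g := Subalgebra.mem_center_iff.mp hw
      calc (z * e i) * s * (z * e i)
          = z * ((e i * s) * z) * (e i) := by noncomm_ring
        _ = z * (z * (e i * s)) * (e i) := by rw [hzc]
        _ = z * z * (e i * s * e i) := by noncomm_ring
        _ = z * z * (w * e i) := by rw [hweq]
        _ = w * (z * z * e i) := by rw [← mul_assoc, hwc (z * z), mul_assoc]
        _ = 0 := by rw [hsq, mul_zero]
    have hzero : z * e i = 0 := by
      rcases hprime (z * e i) (z * e i) hall with h' | h' <;> exact h'
    rw [harb, hzero]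
  rcases hprime a b key with h' | h'
  · exact ha0 h'
  · exact hb0 h'
end

section
/- The center of the conifold quiver algebra is isomorphic to k[a,b,c,d]/(ab − cd). Here the conifold algebra A = kQ/∂W has quiver Q with two vertices 1, 2, arrows x_1, x_2 from 2 to 1 and y_1, y_2 from 1 to 2, and superpotential W = y_1 x_2 y_2 x_1 − y_2 x_2 y_1 x_1. -/
namespace Stmt12

/-- Generators of the conifold quiver path algebra: two vertices `v1, v2`, two arrows
`x1, x2 : 2 → 1` and two arrows `y1, y2 : 1 → 2`. -/
inductive Gen : Type
  | x1 | x2 | y1 | y2 | v1 | v2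
  deriving DecidableEq

variable (k : Type*) [Field k]

open FreeAlgebra

abbrev F := FreeAlgebra k Gen

noncomputable def X1 : F k := ι k Gen.x1
noncomputable def X2 : F k := ι k Gen.x2
noncomputable def Y1 : F k := ι k Gen.y1
noncomputable def Y2 : F k := ι k Gen.y2
noncomputable def E1 : F k := ι k Gen.v1
noncomputable def E2 : F k := ι k Gen.v2

/-- Relations defining the conifold superpotential algebra `A = kQ/∂W`,
`W = y1 x2 y2 x1 − y2 x2 y1 x1`: the path algebra relations (the vertices form a complete
set of orthogonal idempotents and arrows compose according to heads and tails) together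
with the cyclic derivatives of `W`:
`∂_{x1}W = y1x2y2 − y2x2y1`, `∂_{x2}W = y2x1y1 − y1x1y2`,
`∂_{y1}W = x2y2x1 − x1y2x2`, `∂_{y2}W = x1y1x2 − x2y1x1`. -/
noncomputable def rel : F k → F k → Prop := fun a b =>
  (a = E1 k * E1 k ∧ b = E1 k) ∨ (a = E2 k * E2 k ∧ b = E2 k) ∨
  (a = E1 k * E2 k ∧ b = 0) ∨ (a = E2 k * E1 k ∧ b = 0) ∨
  (a = E1 k + E2 k ∧ b = 1) ∨
  (a = E1 k * X1 k ∧ b = X1 k) ∨ (a = X1 k * E2 k ∧ b = X1 k) ∨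
  (a = E1 k * X2 k ∧ b = X2 k) ∨ (a = X2 k * E2 k ∧ b = X2 k) ∨
  (a = E2 k * Y1 k ∧ b = Y1 k) ∨ (a = Y1 k * E1 k ∧ b = Y1 k) ∨
  (a = E2 k * Y2 k ∧ b = Y2 k) ∨ (a = Y2 k * E1 k ∧ b = Y2 k) ∨
  (a = Y1 k * X2 k * Y2 k ∧ b = Y2 k * X2 k * Y1 k) ∨
  (a = Y2 k * X1 k * Y1 k ∧ b = Y1 k * X1 k * Y2 k) ∨
  (a = X2 k * Y2 k * X1 k ∧ b = X1 k * Y2 k * X2 k) ∨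
  (a = X1 k * Y1 k * X2 k ∧ b = X2 k * Y1 k * X1 k)

/-- The conifold superpotential algebra. -/
noncomputable abbrev A := RingQuot (rel k)

/-! Basic elements of `A`. -/

noncomputable def pa : F k →ₐ[k] A k := RingQuot.mkAlgHom k (rel k)

noncomputable def e1 : A k := pa k (E1 k)
noncomputable def e2 : A k := pa k (E2 k)
noncomputable def ax1 : A k := pa k (X1 k)
noncomputable def ax2 : A k := pa k (X2 k)
noncomputable def ay1 : A k := pa k (Y1 k)
noncomputable def ay2 : A k := pa k (Y2 k)

variable {k}

lemma req {a b : F k} (h : rel k a b) : pa k a = pa k b := RingQuot.mkAlgHom_rel k h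

lemma he11 : e1 k * e1 k = e1 k := by
  simpa [e1, map_mul] using req (k := k) (Or.inl ⟨rfl, rfl⟩)
lemma he22 : e2 k * e2 k = e2 k := by
  simpa [e2, map_mul] using req (k := k) (Or.inr <| Or.inl ⟨rfl, rfl⟩)
lemma he12 : e1 k * e2 k = 0 := by
  simpa [e1, e2, map_mul] using req (k := k) (Or.inr <| Or.inr <| Or.inl ⟨rfl, rfl⟩)
lemma he21 : e2 k * e1 k = 0 := by
  simpa [e1, e2, map_mul] using req (k := k) (Or.inr <| Or.inr <| Or.inr <| Or.inl ⟨rfl, rfl⟩)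
lemma hsum : e1 k + e2 k = 1 := by
  simpa [e1, e2, map_add] using req (k := k) (Or.inr <| Or.inr <| Or.inr <| Or.inr <| Or.inl ⟨rfl, rfl⟩)
lemma hex1 : e1 k * ax1 k = ax1 k := by
  simpa [e1, ax1, map_mul] using req (k := k) (Or.inr <| Or.inr <| Or.inr <| Or.inr <| Or.inr <| Or.inl ⟨rfl, rfl⟩)
lemma hx1e : ax1 k * e2 k = ax1 k := by
  simpa [e2, ax1, map_mul] using req (k := k) (Or.inr <| Or.inr <| Or.inr <| Or.inr <| Or.inr <| Or.inr <| Or.inl ⟨rfl, rfl⟩)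
lemma hex2 : e1 k * ax2 k = ax2 k := by
  simpa [e1, ax2, map_mul] using req (k := k) (Or.inr <| Or.inr <| Or.inr <| Or.inr <| Or.inr <| Or.inr <| Or.inr <| Or.inl ⟨rfl, rfl⟩)
lemma hx2e : ax2 k * e2 k = ax2 k := by
  simpa [e2, ax2, map_mul] using req (k := k) (Or.inr <| Or.inr <| Or.inr <| Or.inr <| Or.inr <| Or.inr <| Or.inr <| Or.inr <| Or.inl ⟨rfl, rfl⟩)
lemma hey1 : e2 k * ay1 k = ay1 k := by
  simpa [e2, ay1, map_mul] using req (k := k) (Or.inr <| Or.inr <| Or.inr <| Or.inr <| Or.inr <| Or.inr <| Or.inr <| Or.inr <| Or.inr <| Or.inl ⟨rfl, rfl⟩)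
lemma hy1e : ay1 k * e1 k = ay1 k := by
  simpa [e1, ay1, map_mul] using req (k := k) (Or.inr <| Or.inr <| Or.inr <| Or.inr <| Or.inr <| Or.inr <| Or.inr <| Or.inr <| Or.inr <| Or.inr <| Or.inl ⟨rfl, rfl⟩)
lemma hey2 : e2 k * ay2 k = ay2 k := by
  simpa [e2, ay2, map_mul] using req (k := k) (Or.inr <| Or.inr <| Or.inr <| Or.inr <| Or.inr <| Or.inr <| Or.inr <| Or.inr <| Or.inr <| Or.inr <| Or.inr <| Or.inl ⟨rfl, rfl⟩)
lemma hy2e : ay2 k * e1 k = ay2 k := by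
  simpa [e1, ay2, map_mul] using req (k := k) (Or.inr <| Or.inr <| Or.inr <| Or.inr <| Or.inr <| Or.inr <| Or.inr <| Or.inr <| Or.inr <| Or.inr <| Or.inr <| Or.inr <| Or.inl ⟨rfl, rfl⟩)
lemma hW1 : ay1 k * ax2 k * ay2 k = ay2 k * ax2 k * ay1 k := by
  simpa [ax2, ay1, ay2, map_mul] using req (k := k) (Or.inr <| Or.inr <| Or.inr <| Or.inr <| Or.inr <| Or.inr <| Or.inr <| Or.inr <| Or.inr <| Or.inr <| Or.inr <| Or.inr <| Or.inr <| Or.inl ⟨rfl, rfl⟩)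
lemma hW2 : ay2 k * ax1 k * ay1 k = ay1 k * ax1 k * ay2 k := by
  simpa [ax1, ay1, ay2, map_mul] using req (k := k) (Or.inr <| Or.inr <| Or.inr <| Or.inr <| Or.inr <| Or.inr <| Or.inr <| Or.inr <| Or.inr <| Or.inr <| Or.inr <| Or.inr <| Or.inr <| Or.inr <| Or.inl ⟨rfl, rfl⟩)
lemma hW3 : ax2 k * ay2 k * ax1 k = ax1 k * ay2 k * ax2 k := by
  simpa [ax1, ax2, ay2, map_mul] using req (k := k) (Or.inr <| Or.inr <| Or.inr <| Or.inr <| Or.inr <| Or.inr <| Or.inr <| Or.inr <| Or.inr <| Or.inr <| Or.inr <| Or.inr <| Or.inr <| Or.inr <| Or.inr <| Or.inl ⟨rfl, rfl⟩)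
lemma hW4 : ax1 k * ay1 k * ax2 k = ax2 k * ay1 k * ax1 k := by
  simpa [ax1, ax2, ay1, map_mul] using req (k := k) (Or.inr <| Or.inr <| Or.inr <| Or.inr <| Or.inr <| Or.inr <| Or.inr <| Or.inr <| Or.inr <| Or.inr <| Or.inr <| Or.inr <| Or.inr <| Or.inr <| Or.inr <| Or.inr ⟨rfl, rfl⟩)

/-! Derived relations. -/

lemma hx1e1 : ax1 k * e1 k = 0 := by rw [← hx1e, mul_assoc, he21, mul_zero]
lemma hx2e1 : ax2 k * e1 k = 0 := by rw [← hx2e, mul_assoc, he21, mul_zero]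
lemma he2x1 : e2 k * ax1 k = 0 := by rw [← hex1, ← mul_assoc, he21, zero_mul]
lemma he2x2 : e2 k * ax2 k = 0 := by rw [← hex2, ← mul_assoc, he21, zero_mul]
lemma hy1e2 : ay1 k * e2 k = 0 := by rw [← hy1e, mul_assoc, he12, mul_zero]
lemma hy2e2 : ay2 k * e2 k = 0 := by rw [← hy2e, mul_assoc, he12, mul_zero]
lemma he1y1 : e1 k * ay1 k = 0 := by rw [← hey1, ← mul_assoc, he12, zero_mul]
lemma he1y2 : e1 k * ay2 k = 0 := by rw [← hey2, ← mul_assoc, he12, zero_mul]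
lemma hx1x1 : ax1 k * ax1 k = 0 := by nth_rewrite 1 [← hx1e]; rw [mul_assoc, he2x1, mul_zero]
lemma hx1x2 : ax1 k * ax2 k = 0 := by rw [← hx1e, mul_assoc, he2x2, mul_zero]
lemma hx2x1 : ax2 k * ax1 k = 0 := by rw [← hx2e, mul_assoc, he2x1, mul_zero]
lemma hx2x2 : ax2 k * ax2 k = 0 := by nth_rewrite 1 [← hx2e]; rw [mul_assoc, he2x2, mul_zero]
lemma hy1y1 : ay1 k * ay1 k = 0 := by nth_rewrite 1 [← hy1e]; rw [mul_assoc, he1y1, mul_zero]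
lemma hy1y2 : ay1 k * ay2 k = 0 := by rw [← hy1e, mul_assoc, he1y2, mul_zero]
lemma hy2y1 : ay2 k * ay1 k = 0 := by rw [← hy2e, mul_assoc, he1y1, mul_zero]
lemma hy2y2 : ay2 k * ay2 k = 0 := by nth_rewrite 1 [← hy2e]; rw [mul_assoc, he1y2, mul_zero]


/-! Central elements. -/

attribute [local simp] he11 he22 he12 he21 hex1 hx1e hex2 hx2e hey1 hy1e hey2 hy2e
  hx1e1 hx2e1 he2x1 he2x2 hy1e2 hy2e2 he1y1 he1y2
  hx1x1 hx1x2 hx2x1 hx2x2 hy1y1 hy1y2 hy2y1 hy2y2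

lemma hW1r : ay1 k * (ax2 k * ay2 k) = ay2 k * (ax2 k * ay1 k) := by
  rw [← mul_assoc, hW1, mul_assoc]
lemma hW2r : ay2 k * (ax1 k * ay1 k) = ay1 k * (ax1 k * ay2 k) := by
  rw [← mul_assoc, hW2, mul_assoc]
lemma hW3r : ax2 k * (ay2 k * ax1 k) = ax1 k * (ay2 k * ax2 k) := by
  rw [← mul_assoc, hW3, mul_assoc]
lemma hW4r : ax1 k * (ay1 k * ax2 k) = ax2 k * (ay1 k * ax1 k) := by
  rw [← mul_assoc, hW4, mul_assoc]

lemma p_e1_e1 (t : A k) : e1 k * (e1 k * t) = e1 k * t := by rw [← mul_assoc, he11]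
lemma p_e2_e2 (t : A k) : e2 k * (e2 k * t) = e2 k * t := by rw [← mul_assoc, he22]
lemma p_e1_e2 (t : A k) : e1 k * (e2 k * t) = 0 := by rw [← mul_assoc, he12, zero_mul]
lemma p_e2_e1 (t : A k) : e2 k * (e1 k * t) = 0 := by rw [← mul_assoc, he21, zero_mul]
lemma p_e1_ax1 (t : A k) : e1 k * (ax1 k * t) = ax1 k * t := by rw [← mul_assoc, hex1]
lemma p_ax1_e2 (t : A k) : ax1 k * (e2 k * t) = ax1 k * t := by rw [← mul_assoc, hx1e]
lemma p_e1_ax2 (t : A k) : e1 k * (ax2 k * t) = ax2 k * t := by rw [← mul_assoc, hex2]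
lemma p_ax2_e2 (t : A k) : ax2 k * (e2 k * t) = ax2 k * t := by rw [← mul_assoc, hx2e]
lemma p_e2_ay1 (t : A k) : e2 k * (ay1 k * t) = ay1 k * t := by rw [← mul_assoc, hey1]
lemma p_ay1_e1 (t : A k) : ay1 k * (e1 k * t) = ay1 k * t := by rw [← mul_assoc, hy1e]
lemma p_e2_ay2 (t : A k) : e2 k * (ay2 k * t) = ay2 k * t := by rw [← mul_assoc, hey2]
lemma p_ay2_e1 (t : A k) : ay2 k * (e1 k * t) = ay2 k * t := by rw [← mul_assoc, hy2e]
lemma p_ax1_e1 (t : A k) : ax1 k * (e1 k * t) = 0 := by rw [← mul_assoc, hx1e1, zero_mul]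
lemma p_ax2_e1 (t : A k) : ax2 k * (e1 k * t) = 0 := by rw [← mul_assoc, hx2e1, zero_mul]
lemma p_e2_ax1 (t : A k) : e2 k * (ax1 k * t) = 0 := by rw [← mul_assoc, he2x1, zero_mul]
lemma p_e2_ax2 (t : A k) : e2 k * (ax2 k * t) = 0 := by rw [← mul_assoc, he2x2, zero_mul]
lemma p_ay1_e2 (t : A k) : ay1 k * (e2 k * t) = 0 := by rw [← mul_assoc, hy1e2, zero_mul]
lemma p_ay2_e2 (t : A k) : ay2 k * (e2 k * t) = 0 := by rw [← mul_assoc, hy2e2, zero_mul]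
lemma p_e1_ay1 (t : A k) : e1 k * (ay1 k * t) = 0 := by rw [← mul_assoc, he1y1, zero_mul]
lemma p_e1_ay2 (t : A k) : e1 k * (ay2 k * t) = 0 := by rw [← mul_assoc, he1y2, zero_mul]
lemma p_ax1_ax1 (t : A k) : ax1 k * (ax1 k * t) = 0 := by rw [← mul_assoc, hx1x1, zero_mul]
lemma p_ax1_ax2 (t : A k) : ax1 k * (ax2 k * t) = 0 := by rw [← mul_assoc, hx1x2, zero_mul]
lemma p_ax2_ax1 (t : A k) : ax2 k * (ax1 k * t) = 0 := by rw [← mul_assoc, hx2x1, zero_mul]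
lemma p_ax2_ax2 (t : A k) : ax2 k * (ax2 k * t) = 0 := by rw [← mul_assoc, hx2x2, zero_mul]
lemma p_ay1_ay1 (t : A k) : ay1 k * (ay1 k * t) = 0 := by rw [← mul_assoc, hy1y1, zero_mul]
lemma p_ay1_ay2 (t : A k) : ay1 k * (ay2 k * t) = 0 := by rw [← mul_assoc, hy1y2, zero_mul]
lemma p_ay2_ay1 (t : A k) : ay2 k * (ay1 k * t) = 0 := by rw [← mul_assoc, hy2y1, zero_mul]
lemma p_ay2_ay2 (t : A k) : ay2 k * (ay2 k * t) = 0 := by rw [← mul_assoc, hy2y2, zero_mul]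

attribute [local simp] p_e1_e1 p_e2_e2 p_e1_e2 p_e2_e1 p_e1_ax1 p_ax1_e2 p_e1_ax2 p_ax2_e2 p_e2_ay1 p_ay1_e1 p_e2_ay2 p_ay2_e1 p_ax1_e1 p_ax2_e1 p_e2_ax1 p_e2_ax2 p_ay1_e2 p_ay2_e2 p_e1_ay1 p_e1_ay2 p_ax1_ax1 p_ax1_ax2 p_ax2_ax1 p_ax2_ax2 p_ay1_ay1 p_ay1_ay2 p_ay2_ay1 p_ay2_ay2

attribute [local simp] hW1r hW2r hW3r hW4r

variable (k)

noncomputable def z11 : A k := ax1 k * ay1 k + ay1 k * ax1 k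
noncomputable def z22 : A k := ax2 k * ay2 k + ay2 k * ax2 k
noncomputable def z12 : A k := ax1 k * ay2 k + ay2 k * ax1 k
noncomputable def z21 : A k := ax2 k * ay1 k + ay1 k * ax2 k

/-- The generators of `A` as a `k`-algebra. -/
noncomputable def G : Set (A k) := {e1 k, e2 k, ax1 k, ax2 k, ay1 k, ay2 k}

lemma adjoin_G : Algebra.adjoin k (G k) = ⊤ := by
  have himg : G k = ⇑(pa k) '' Set.range (ι k (X := Gen)) := by
    ext a
    constructor
    · rintro (rfl | rfl | rfl | rfl | rfl | rfl)
      · exact ⟨E1 k, ⟨Gen.v1, rfl⟩, rfl⟩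
      · exact ⟨E2 k, ⟨Gen.v2, rfl⟩, rfl⟩
      · exact ⟨X1 k, ⟨Gen.x1, rfl⟩, rfl⟩
      · exact ⟨X2 k, ⟨Gen.x2, rfl⟩, rfl⟩
      · exact ⟨Y1 k, ⟨Gen.y1, rfl⟩, rfl⟩
      · exact ⟨Y2 k, ⟨Gen.y2, rfl⟩, rfl⟩
    · rintro ⟨f, ⟨g, rfl⟩, rfl⟩
      cases g
      · exact Or.inr (Or.inr (Or.inl rfl))
      · exact Or.inr (Or.inr (Or.inr (Or.inl rfl)))
      · exact Or.inr (Or.inr (Or.inr (Or.inr (Or.inl rfl))))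
      · exact Or.inr (Or.inr (Or.inr (Or.inr (Or.inr rfl))))
      · exact Or.inl rfl
      · exact Or.inr (Or.inl rfl)
  rw [himg, ← AlgHom.map_adjoin, FreeAlgebra.adjoin_range_ι, Algebra.map_top]
  exact (AlgHom.range_eq_top (pa k)).mpr (RingQuot.mkAlgHom_surjective k (rel k))

variable {k}

lemma mem_center_of_gens {z : A k} (h : ∀ g ∈ G k, g * z = z * g) :
    z ∈ Subalgebra.center k (A k) := by
  rw [Subalgebra.mem_center_iff]
  intro b
  have hb : b ∈ Subalgebra.centralizer k {z} := by
    have : Algebra.adjoin k (G k) ≤ Subalgebra.centralizer k {z} := by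
      rw [Algebra.adjoin_le_iff]
      intro g hg
      rw [SetLike.mem_coe, Subalgebra.mem_centralizer_iff]
      rintro w rfl
      exact (h g hg).symm
    exact this (by rw [adjoin_G]; trivial)
  rw [Subalgebra.mem_centralizer_iff] at hb
  exact (hb z rfl).symm

lemma z11_mem : z11 k ∈ Subalgebra.center k (A k) := by
  apply mem_center_of_gens
  rintro g (rfl | rfl | rfl | rfl | rfl | rfl) <;>
    simp [z11, mul_add, add_mul, mul_assoc]

lemma z22_mem : z22 k ∈ Subalgebra.center k (A k) := by
  apply mem_center_of_gens
  rintro g (rfl | rfl | rfl | rfl | rfl | rfl) <;>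
    simp [z22, mul_add, add_mul, mul_assoc]

lemma z12_mem : z12 k ∈ Subalgebra.center k (A k) := by
  apply mem_center_of_gens
  rintro g (rfl | rfl | rfl | rfl | rfl | rfl) <;>
    simp [z12, mul_add, add_mul, mul_assoc]

lemma z21_mem : z21 k ∈ Subalgebra.center k (A k) := by
  apply mem_center_of_gens
  rintro g (rfl | rfl | rfl | rfl | rfl | rfl) <;>
    simp [z21, mul_add, add_mul, mul_assoc]


/-! The map from polynomials to central elements. -/

variable (k)

noncomputable def zc : Fin 4 → Subalgebra.center k (A k) :=
  ![⟨z11 k, z11_mem⟩, ⟨z22 k, z22_mem⟩, ⟨z12 k, z12_mem⟩, ⟨z21 k, z21_mem⟩]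

noncomputable def phi0 : MvPolynomial (Fin 4) k →ₐ[k] A k :=
  (Subalgebra.center k (A k)).val.comp (MvPolynomial.aeval (zc k))

variable {k}

lemma phi0_mem (p : MvPolynomial (Fin 4) k) : phi0 k p ∈ Subalgebra.center k (A k) :=
  (MvPolynomial.aeval (zc k) p).2

lemma phi0_comm (p : MvPolynomial (Fin 4) k) (t : A k) : t * phi0 k p = phi0 k p * t :=
  Subalgebra.mem_center_iff.mp (phi0_mem p) t

@[simp] lemma phi0_X0 : phi0 k (MvPolynomial.X 0) = z11 k := by
  simp [phi0, zc]
@[simp] lemma phi0_X1 : phi0 k (MvPolynomial.X 1) = z22 k := by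
  simp [phi0, zc]
@[simp] lemma phi0_X2 : phi0 k (MvPolynomial.X 2) = z12 k := by
  simp [phi0, zc]
@[simp] lemma phi0_X3 : phi0 k (MvPolynomial.X 3) = z21 k := by
  simp [phi0, zc]

/-! Products of arrows are central multiples of the idempotents. -/

lemma hz11e1 : ax1 k * ay1 k = z11 k * e1 k := by simp [z11, add_mul, mul_assoc]
lemma hz12e1 : ax1 k * ay2 k = z12 k * e1 k := by simp [z12, add_mul, mul_assoc]
lemma hz21e1 : ax2 k * ay1 k = z21 k * e1 k := by simp [z21, add_mul, mul_assoc]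
lemma hz22e1 : ax2 k * ay2 k = z22 k * e1 k := by simp [z22, add_mul, mul_assoc]
lemma hz11e2 : ay1 k * ax1 k = z11 k * e2 k := by simp [z11, add_mul, mul_assoc]
lemma hz12e2 : ay2 k * ax1 k = z12 k * e2 k := by simp [z12, add_mul, mul_assoc]
lemma hz21e2 : ay1 k * ax2 k = z21 k * e2 k := by simp [z21, add_mul, mul_assoc]
lemma hz22e2 : ay2 k * ax2 k = z22 k * e2 k := by simp [z22, add_mul, mul_assoc]


/-! Spanning of `A` over the central subalgebra. -/

variable (k)

def Pspan (a : A k) : Prop :=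
  ∃ p0 p1 p2 p3 p4 p5 : MvPolynomial (Fin 4) k,
    a = phi0 k p0 * e1 k + phi0 k p1 * e2 k + phi0 k p2 * ax1 k +
        phi0 k p3 * ax2 k + phi0 k p4 * ay1 k + phi0 k p5 * ay2 k

variable {k}

lemma Pspan_one : Pspan k 1 := by
  refine ⟨1, 1, 0, 0, 0, 0, ?_⟩
  simp only [map_one, map_zero, one_mul, zero_mul, add_zero]
  exact hsum.symm

lemma Pspan_add {a b : A k} (ha : Pspan k a) (hb : Pspan k b) : Pspan k (a + b) := by
  obtain ⟨p0, p1, p2, p3, p4, p5, rfl⟩ := ha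
  obtain ⟨q0, q1, q2, q3, q4, q5, rfl⟩ := hb
  refine ⟨p0 + q0, p1 + q1, p2 + q2, p3 + q3, p4 + q4, p5 + q5, ?_⟩
  simp only [map_add, add_mul]
  abel

lemma Pspan_smul (r : k) {a : A k} (ha : Pspan k a) : Pspan k (r • a) := by
  obtain ⟨p0, p1, p2, p3, p4, p5, rfl⟩ := ha
  refine ⟨r • p0, r • p1, r • p2, r • p3, r • p4, r • p5, ?_⟩
  simp only [map_smul, smul_mul_assoc, smul_add]

lemma Pspan_mul_e1 {b : A k} (hb : Pspan k b) : Pspan k (b * e1 k) := by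
  obtain ⟨p0, p1, p2, p3, p4, p5, rfl⟩ := hb
  refine ⟨p0, 0, 0, 0, p4, p5, ?_⟩
  simp [add_mul, mul_assoc]
  try abel

lemma Pspan_mul_e2 {b : A k} (hb : Pspan k b) : Pspan k (b * e2 k) := by
  obtain ⟨p0, p1, p2, p3, p4, p5, rfl⟩ := hb
  refine ⟨0, p1, p2, p3, 0, 0, ?_⟩
  simp [add_mul, mul_assoc]
  try abel

lemma Pspan_mul_x1 {b : A k} (hb : Pspan k b) : Pspan k (b * ax1 k) := by
  obtain ⟨p0, p1, p2, p3, p4, p5, rfl⟩ := hb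
  refine ⟨0, p4 * MvPolynomial.X 0 + p5 * MvPolynomial.X 2, p0, 0, 0, 0, ?_⟩
  simp [add_mul, mul_assoc, map_add, map_mul, hz11e1, hz12e1, hz21e1, hz22e1, hz11e2, hz12e2, hz21e2, hz22e2]
  try abel

lemma Pspan_mul_x2 {b : A k} (hb : Pspan k b) : Pspan k (b * ax2 k) := by
  obtain ⟨p0, p1, p2, p3, p4, p5, rfl⟩ := hb
  refine ⟨0, p4 * MvPolynomial.X 3 + p5 * MvPolynomial.X 1, 0, p0, 0, 0, ?_⟩
  simp [add_mul, mul_assoc, map_add, map_mul, hz11e1, hz12e1, hz21e1, hz22e1, hz11e2, hz12e2, hz21e2, hz22e2]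
  try abel

lemma Pspan_mul_y1 {b : A k} (hb : Pspan k b) : Pspan k (b * ay1 k) := by
  obtain ⟨p0, p1, p2, p3, p4, p5, rfl⟩ := hb
  refine ⟨p2 * MvPolynomial.X 0 + p3 * MvPolynomial.X 3, 0, 0, 0, p1, 0, ?_⟩
  simp [add_mul, mul_assoc, map_add, map_mul, hz11e1, hz12e1, hz21e1, hz22e1, hz11e2, hz12e2, hz21e2, hz22e2]
  try abel

lemma Pspan_mul_y2 {b : A k} (hb : Pspan k b) : Pspan k (b * ay2 k) := by
  obtain ⟨p0, p1, p2, p3, p4, p5, rfl⟩ := hb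
  refine ⟨p2 * MvPolynomial.X 2 + p3 * MvPolynomial.X 1, 0, 0, 0, 0, p1, ?_⟩
  simp [add_mul, mul_assoc, map_add, map_mul, hz11e1, hz12e1, hz21e1, hz22e1, hz11e2, hz12e2, hz21e2, hz22e2]
  try abel

lemma Pspan_mul_pa (f : F k) : ∀ b : A k, Pspan k b → Pspan k (b * pa k f) := by
  induction f using FreeAlgebra.induction with
  | grade0 r =>
      intro b hb
      rw [(pa k).commutes, ← Algebra.commutes r (A := A k), ← Algebra.smul_def]
      exact Pspan_smul r hb
  | grade1 g =>
      intro b hb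
      cases g
      · exact Pspan_mul_x1 hb
      · exact Pspan_mul_x2 hb
      · exact Pspan_mul_y1 hb
      · exact Pspan_mul_y2 hb
      · exact Pspan_mul_e1 hb
      · exact Pspan_mul_e2 hb
  | mul f1 f2 h1 h2 =>
      intro b hb
      rw [map_mul, ← mul_assoc]
      exact h2 _ (h1 _ hb)
  | add f1 f2 h1 h2 =>
      intro b hb
      rw [map_add, mul_add]
      exact Pspan_add (h1 _ hb) (h2 _ hb)

lemma Pspan_all (a : A k) : Pspan k a := by
  obtain ⟨f, rfl⟩ := RingQuot.mkAlgHom_surjective k (rel k) a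
  have := Pspan_mul_pa (k := k) f 1 Pspan_one
  simpa [pa] using this


/-! The matrix representation of `A`. -/

variable (k)

abbrev S := MvPolynomial (Fin 4) k

abbrev MS := Matrix (Fin 2) (Fin 2) (S k)

open MvPolynomial in
noncomputable def mval : Gen → MS k
  | Gen.x1 => !![0, X 0; 0, 0]
  | Gen.x2 => !![0, X 1; 0, 0]
  | Gen.y1 => !![0, 0; X 2, 0]
  | Gen.y2 => !![0, 0; X 3, 0]
  | Gen.v1 => !![1, 0; 0, 0]
  | Gen.v2 => !![0, 0; 0, 1]

noncomputable def lift0 : F k →ₐ[k] MS k := FreeAlgebra.lift k (mval k)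

lemma lift0_rel : ∀ ⦃x y : F k⦄, rel k x y → lift0 k x = lift0 k y := by
  intro x y h
  rcases h with h|h|h|h|h|h|h|h|h|h|h|h|h|h|h|h|h <;> obtain ⟨rfl, rfl⟩ := h <;>
    · simp only [E1, E2, X1, X2, Y1, Y2, map_mul, map_add, map_one, map_zero,
        lift0, FreeAlgebra.lift_ι_apply]
      ext i j
      fin_cases i <;> fin_cases j <;>
        simp [mval, Matrix.mul_apply, Fin.sum_univ_two, Matrix.one_apply] <;> ring

noncomputable def Psi : A k →ₐ[k] MS k :=
  RingQuot.liftAlgHom k ⟨lift0 k, lift0_rel k⟩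

lemma Psi_pa (f : F k) : Psi k (pa k f) = lift0 k f :=
  RingQuot.liftAlgHom_mkAlgHom_apply k (lift0 k) (lift0_rel k) f

open MvPolynomial in
lemma Psi_x1 : Psi k (ax1 k) = !![0, X 0; 0, 0] := by
  rw [ax1, Psi_pa]; simp [lift0, X1, FreeAlgebra.lift_ι_apply, mval]
open MvPolynomial in
lemma Psi_x2 : Psi k (ax2 k) = !![0, X 1; 0, 0] := by
  rw [ax2, Psi_pa]; simp [lift0, X2, FreeAlgebra.lift_ι_apply, mval]
open MvPolynomial in
lemma Psi_y1 : Psi k (ay1 k) = !![0, 0; X 2, 0] := by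
  rw [ay1, Psi_pa]; simp [lift0, Y1, FreeAlgebra.lift_ι_apply, mval]
open MvPolynomial in
lemma Psi_y2 : Psi k (ay2 k) = !![0, 0; X 3, 0] := by
  rw [ay2, Psi_pa]; simp [lift0, Y2, FreeAlgebra.lift_ι_apply, mval]
lemma Psi_e1 : Psi k (e1 k) = !![1, 0; 0, 0] := by
  rw [e1, Psi_pa]; simp [lift0, E1, FreeAlgebra.lift_ι_apply, mval]
lemma Psi_e2 : Psi k (e2 k) = !![0, 0; 0, 1] := by
  rw [e2, Psi_pa]; simp [lift0, E2, FreeAlgebra.lift_ι_apply, mval]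

open MvPolynomial in
/-- The Segre-style map recording the images of the central generators. -/
noncomputable def Segre : MvPolynomial (Fin 4) k →ₐ[k] S k :=
  aeval ![X 0 * X 2, X 1 * X 3, X 0 * X 3, X 1 * X 2]

/-- Scalar matrices, as a `k`-algebra map. -/
noncomputable def scm : S k →ₐ[k] MS k :=
  (Algebra.ofId (S k) (MS k)).restrictScalars k

open MvPolynomial in
lemma Psi_z11 : Psi k (z11 k) = scm k (X 0 * X 2) := by
  simp only [z11, map_add, map_mul, Psi_x1, Psi_y1]
  ext i j
  fin_cases i <;> fin_cases j <;>
    simp [scm, Algebra.ofId_apply, Matrix.algebraMap_eq_diagonal, Matrix.mul_apply,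
      Fin.sum_univ_two] <;> ring

open MvPolynomial in
lemma Psi_z22 : Psi k (z22 k) = scm k (X 1 * X 3) := by
  simp only [z22, map_add, map_mul, Psi_x2, Psi_y2]
  ext i j
  fin_cases i <;> fin_cases j <;>
    simp [scm, Algebra.ofId_apply, Matrix.algebraMap_eq_diagonal, Matrix.mul_apply,
      Fin.sum_univ_two] <;> ring

open MvPolynomial in
lemma Psi_z12 : Psi k (z12 k) = scm k (X 0 * X 3) := by
  simp only [z12, map_add, map_mul, Psi_x1, Psi_y2]
  ext i j
  fin_cases i <;> fin_cases j <;>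
    simp [scm, Algebra.ofId_apply, Matrix.algebraMap_eq_diagonal, Matrix.mul_apply,
      Fin.sum_univ_two] <;> ring

open MvPolynomial in
lemma Psi_z21 : Psi k (z21 k) = scm k (X 1 * X 2) := by
  simp only [z21, map_add, map_mul, Psi_x2, Psi_y1]
  ext i j
  fin_cases i <;> fin_cases j <;>
    simp [scm, Algebra.ofId_apply, Matrix.algebraMap_eq_diagonal, Matrix.mul_apply,
      Fin.sum_univ_two] <;> ring

lemma Psi_phi0 (p : MvPolynomial (Fin 4) k) :
    Psi k (phi0 k p) = scm k (Segre k p) := by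
  have h : (Psi k).comp (phi0 k) = (scm k).comp (Segre k) := by
    apply MvPolynomial.algHom_ext
    intro i
    fin_cases i <;>
      simp [Segre, Psi_z11, Psi_z22, Psi_z12, Psi_z21]
  exact DFunLike.congr_fun h p


/-! The determinant identity among the central elements. -/

lemma zdet' : ay1 k * ax1 k * ay2 k * ax2 k = ay2 k * ax2 k * ay1 k * ax1 k := by
  rw [← hW2, mul_assoc (ay2 k) (ax1 k) (ay1 k), mul_assoc (ay2 k) (ax1 k * ay1 k) (ax2 k),
    hW4, ← mul_assoc, ← mul_assoc]

lemma zdet'r : ay1 k * (ax1 k * (ay2 k * ax2 k)) = ay2 k * (ax2 k * (ay1 k * ax1 k)) := by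
  simpa [mul_assoc] using zdet' (k := k)

lemma zdet : z11 k * z22 k = z12 k * z21 k := by
  simp [z11, z22, z12, z21, mul_add, add_mul, mul_assoc, zdet'r]

open MvPolynomial in
lemma qdet : phi0 k (X 0 * X 1 - X 2 * X 3) = 0 := by
  simp [map_sub, map_mul, zdet]

/-! Extracting polynomial identities through `Psi`. -/

lemma scm_apply00 (s : S k) : scm k s 0 0 = s := by
  simp [scm, Algebra.ofId_apply, Matrix.algebraMap_eq_diagonal]

lemma Segre_eq_zero_of_phi0 {p : MvPolynomial (Fin 4) k} (h : phi0 k p = 0) :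
    Segre k p = 0 := by
  have h2 : scm k (Segre k p) = 0 := by rw [← Psi_phi0, h, map_zero]
  have := congrFun (congrFun (congrArg (fun m => (m : MS k)) h2) 0) 0
  simpa [scm_apply00] using this

lemma Segre_eq_zero_of_phi0_mul_x1 {p : MvPolynomial (Fin 4) k}
    (h : phi0 k p * ax1 k = 0) : Segre k p = 0 := by
  have h2 : scm k (Segre k p) * Psi k (ax1 k) = 0 := by
    rw [← Psi_phi0, ← map_mul, h, map_zero]
  rw [Psi_x1] at h2
  have h3 := congrFun (congrFun (congrArg (fun m => (m : MS k)) h2) 0) 1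
  simp only [Matrix.mul_apply, Fin.sum_univ_two] at h3
  have h4 : Segre k p * MvPolynomial.X 0 = 0 := by
    simpa [scm, Algebra.ofId_apply, Matrix.algebraMap_eq_diagonal] using h3
  rcases mul_eq_zero.mp h4 with h5 | h5
  · exact h5
  · exact absurd h5 (MvPolynomial.X_ne_zero 0)


/-! Kernel of the Segre map. -/

open MvPolynomial

noncomputable def qpoly : MvPolynomial (Fin 4) k :=
  X 0 * X 1 - X 2 * X 3

lemma Segre_X0 : Segre k (X 0) = X 0 * X 2 := by simp [Segre]
lemma Segre_X1 : Segre k (X 1) = X 1 * X 3 := by simp [Segre]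
lemma Segre_X2 : Segre k (X 2) = X 0 * X 3 := by simp [Segre]
lemma Segre_X3 : Segre k (X 3) = X 1 * X 2 := by simp [Segre]

lemma Segre_qpoly : Segre k (qpoly k) = 0 := by
  rw [qpoly, map_sub, map_mul, map_mul, Segre_X0, Segre_X1, Segre_X2, Segre_X3]
  ring

/-- Polynomials supported on monomials not divisible by `X 0 * X 1`. -/
def Vgood : Submodule k (MvPolynomial (Fin 4) k) where
  carrier := {p | ∀ m ∈ p.support, m 0 = 0 ∨ m 1 = 0}
  zero_mem' := by simp
  add_mem' := by
    intro a b ha hb m hm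
    rcases Finset.mem_union.mp (MvPolynomial.support_add hm) with h | h
    · exact ha m h
    · exact hb m h
  smul_mem' := by
    intro c a ha m hm
    exact ha m (MvPolynomial.support_smul hm)

lemma stepA_mono : ∀ (n : ℕ) (m : Fin 4 →₀ ℕ), m 0 ≤ n →
    ∃ v h : MvPolynomial (Fin 4) k, v ∈ Vgood k ∧
      (monomial m (1 : k)) = v + qpoly k * h := by
  intro n
  induction n with
  | zero =>
      intro m hm
      refine ⟨monomial m 1, 0, ?_, by simp⟩
      intro m' hm'
      rcases Finset.mem_singleton.mp (support_monomial_subset hm') with rfl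
      exact Or.inl (Nat.le_zero.mp hm)
  | succ n ih =>
      intro m hm
      by_cases h0 : m 0 = 0
      · refine ⟨monomial m 1, 0, ?_, by simp⟩
        intro m' hm'
        rcases Finset.mem_singleton.mp (support_monomial_subset hm') with rfl
        exact Or.inl h0
      by_cases h1 : m 1 = 0
      · refine ⟨monomial m 1, 0, ?_, by simp⟩
        intro m' hm'
        rcases Finset.mem_singleton.mp (support_monomial_subset hm') with rfl
        exact Or.inr h1
      -- both exponents positive
      set m' : Fin 4 →₀ ℕ := m - Finsupp.single 0 1 - Finsupp.single 1 1 with hm'def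
      have hsplit : m = m' + Finsupp.single 0 1 + Finsupp.single 1 1 := by
        ext j
        fin_cases j <;>
          simp [hm'def, Finsupp.sub_apply, Finsupp.single_apply, Finsupp.add_apply] <;>
          omega
      have hmono : (monomial m (1 : k)) = monomial m' 1 * (X 0 * X 1) := by
        rw [X, X, monomial_mul, monomial_mul, mul_one, mul_one, ← add_assoc, ← hsplit]
      set m'' : Fin 4 →₀ ℕ := m' + Finsupp.single 2 1 + Finsupp.single 3 1 with hm''def
      have hm''0 : m'' 0 ≤ n := by
        have : m' 0 = m 0 - 1 := by
          simp [hm'def, Finsupp.sub_apply, Finsupp.single_apply]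
        simp only [hm''def, Finsupp.add_apply, Finsupp.single_apply, this]
        simp
        omega
      obtain ⟨v, h, hv, heq⟩ := ih m'' hm''0
      refine ⟨v, h + monomial m' 1, hv, ?_⟩
      have hmono2 : (monomial m'' (1 : k)) = monomial m' 1 * (X 2 * X 3) := by
        rw [X, X, monomial_mul, monomial_mul, mul_one, mul_one, ← add_assoc, ← hm''def]
      calc (monomial m (1 : k)) = monomial m' 1 * (X 0 * X 1) := hmono
        _ = monomial m' 1 * qpoly k + monomial m' 1 * (X 2 * X 3) := by
              rw [qpoly]; ring
        _ = monomial m'' 1 + qpoly k * monomial m' 1 := by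
              rw [← hmono2]; ring
        _ = (v + qpoly k * h) + qpoly k * monomial m' 1 := by rw [← heq]
        _ = v + qpoly k * (h + monomial m' 1) := by ring

lemma stepA (p : MvPolynomial (Fin 4) k) :
    ∃ v h : MvPolynomial (Fin 4) k, v ∈ Vgood k ∧ p = v + qpoly k * h := by
  induction p using MvPolynomial.induction_on' with
  | monomial m c =>
      obtain ⟨v, h, hv, heq⟩ := stepA_mono k (m 0) m le_rfl
      refine ⟨c • v, c • h, (Vgood k).smul_mem c hv, ?_⟩
      have : (monomial m c) = c • (monomial m (1 : k)) := by
        simp [smul_monomial]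
      rw [this, heq, smul_add, mul_smul_comm]
  | add a b ha hb =>
      obtain ⟨va, ha', hva, heqa⟩ := ha
      obtain ⟨vb, hb', hvb, heqb⟩ := hb
      exact ⟨va + vb, ha' + hb', (Vgood k).add_mem hva hvb,
        by rw [heqa, heqb]; ring⟩

/-! Injectivity on good monomials. -/

noncomputable def Emul (m : Fin 4 →₀ ℕ) : Fin 4 →₀ ℕ :=
  m 0 • (Finsupp.single 0 1 + Finsupp.single 2 1) +
  m 1 • (Finsupp.single 1 1 + Finsupp.single 3 1) +
  m 2 • (Finsupp.single 0 1 + Finsupp.single 3 1) +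
  m 3 • (Finsupp.single 1 1 + Finsupp.single 2 1)

lemma Emul_apply (m : Fin 4 →₀ ℕ) :
    Emul m 0 = m 0 + m 2 ∧ Emul m 1 = m 1 + m 3 ∧
    Emul m 2 = m 0 + m 3 ∧ Emul m 3 = m 1 + m 2 := by
  refine ⟨?_, ?_, ?_, ?_⟩ <;>
    simp [Emul, Finsupp.add_apply, Finsupp.smul_apply, Finsupp.single_apply]

lemma Emul_inj {m m' : Fin 4 →₀ ℕ} (hm : m 0 = 0 ∨ m 1 = 0)
    (hm' : m' 0 = 0 ∨ m' 1 = 0) (h : Emul m = Emul m') : m = m' := by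
  obtain ⟨a0, a1, a2, a3⟩ := Emul_apply m
  obtain ⟨b0, b1, b2, b3⟩ := Emul_apply m'
  have h0 := DFunLike.congr_fun h 0
  have h1 := DFunLike.congr_fun h 1
  have h2 := DFunLike.congr_fun h 2
  have h3 := DFunLike.congr_fun h 3
  rw [a0, b0] at h0; rw [a1, b1] at h1; rw [a2, b2] at h2; rw [a3, b3] at h3
  ext j
  fin_cases j <;> rcases hm with hm | hm <;> rcases hm' with hm' | hm' <;> simp <;> omega

lemma Segre_monomial (m : Fin 4 →₀ ℕ) (c : k) :
    Segre k (monomial m c) = monomial (Emul m) c := by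
  obtain ⟨hE0, hE1, hE2, hE3⟩ := Emul_apply m
  rw [monomial_eq, monomial_eq,
    Finsupp.prod_fintype _ _ (fun i => pow_zero _),
    Finsupp.prod_fintype _ _ (fun i => pow_zero _),
    Fin.prod_univ_four, Fin.prod_univ_four, hE0, hE1, hE2, hE3]
  rw [map_mul, map_mul, map_mul, map_mul, map_pow, map_pow, map_pow, map_pow,
    Segre_X0, Segre_X1, Segre_X2, Segre_X3]
  rw [show Segre k (C c) = C c by simp [Segre, algebraMap_eq]]
  ring

lemma stepB {v : MvPolynomial (Fin 4) k} (hv : v ∈ Vgood k)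
    (h : Segre k v = 0) : v = 0 := by
  have hsum : Segre k v = ∑ m ∈ v.support, monomial (Emul m) (coeff m v) := by
    conv_lhs => rw [← support_sum_monomial_coeff v]
    rw [map_sum]
    exact Finset.sum_congr rfl fun m _ => Segre_monomial k m (coeff m v)
  ext m₀
  rw [coeff_zero]
  by_cases hmem : m₀ ∈ v.support
  · have hc : coeff (Emul m₀) (Segre k v) = coeff m₀ v := by
      rw [hsum, coeff_sum]
      rw [Finset.sum_eq_single m₀]
      · rw [coeff_monomial, if_pos rfl]
      · intro m hm hne
        rw [coeff_monomial, if_neg]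
        intro hEe
        exact hne (Emul_inj (hv m hm) (hv m₀ hmem) hEe)
      · intro hnot; exact absurd hmem hnot
    rw [h, coeff_zero] at hc
    exact hc.symm
  · exact notMem_support_iff.mp hmem

/-- The kernel of the Segre map is generated by the quadric. -/
lemma H1 {p : MvPolynomial (Fin 4) k} (h : Segre k p = 0) :
    p ∈ Ideal.span {qpoly k} := by
  obtain ⟨v, g, hv, heq⟩ := stepA k p
  have hS : Segre k v = 0 := by
    have h2 := congrArg (Segre k) heq
    rw [h, map_add, map_mul, Segre_qpoly, zero_mul, add_zero] at h2
    exact h2.symm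
  have hv0 : v = 0 := stepB k hv hS
  rw [heq, hv0, zero_add]
  exact Ideal.mem_span_singleton'.mpr ⟨g, mul_comm _ _⟩


/-! Final assembly. -/

lemma phi0_mul_left (p : MvPolynomial (Fin 4) k) (s t : A k) :
    s * (phi0 k p * t) = phi0 k p * (s * t) := by
  rw [← mul_assoc, phi0_comm, mul_assoc]

noncomputable def aevalC : MvPolynomial (Fin 4) k →ₐ[k] Subalgebra.center k (A k) :=
  MvPolynomial.aeval (zc k)

lemma phi0_eq_val (p : MvPolynomial (Fin 4) k) : phi0 k p = (aevalC k p : A k) := rfl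

lemma phi0_qpoly : phi0 k (qpoly k) = 0 := by
  rw [qpoly]; exact qdet k

lemma phi0_span {p : MvPolynomial (Fin 4) k} (h : p ∈ Ideal.span {qpoly k}) :
    phi0 k p = 0 := by
  obtain ⟨g, rfl⟩ := Ideal.mem_span_singleton'.mp h
  rw [map_mul, phi0_qpoly, mul_zero]

lemma aevalC_span (a : MvPolynomial (Fin 4) k) (h : a ∈ Ideal.span {qpoly k}) :
    aevalC k a = 0 := by
  apply Subtype.ext
  rw [ZeroMemClass.coe_zero, ← phi0_eq_val]
  exact phi0_span k h

noncomputable def phibar :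
    (MvPolynomial (Fin 4) k ⧸ Ideal.span {qpoly k}) →ₐ[k] Subalgebra.center k (A k) :=
  Ideal.Quotient.liftₐ _ (aevalC k) (aevalC_span k)

lemma phibar_mk (p : MvPolynomial (Fin 4) k) :
    phibar k (Ideal.Quotient.mk _ p) = aevalC k p := by
  simp [phibar]
  rfl

lemma phibar_injective : Function.Injective (phibar k) := by
  intro a b hab
  obtain ⟨p, rfl⟩ := Ideal.Quotient.mk_surjective a
  obtain ⟨q, rfl⟩ := Ideal.Quotient.mk_surjective b
  rw [phibar_mk, phibar_mk] at hab
  have h0 : phi0 k (p - q) = 0 := by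
    rw [map_sub, phi0_eq_val, phi0_eq_val, hab, sub_self]
  have hS : Segre k (p - q) = 0 := Segre_eq_zero_of_phi0 k h0
  exact Ideal.Quotient.eq.mpr (H1 k hS)

lemma phibar_surjective : Function.Surjective (phibar k) := by
  intro z
  set zv : A k := (z : A k) with hzv
  have hzc : ∀ t : A k, t * zv = zv * t := Subalgebra.mem_center_iff.mp z.2
  obtain ⟨p0, p1, p2, p3, p4, p5, hexp⟩ := Pspan_all zv
  -- `e1 * zv` and `zv * e1`
  have hA : e1 k * zv = phi0 k p0 * e1 k + phi0 k p2 * ax1 k + phi0 k p3 * ax2 k := by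
    rw [hexp]
    simp only [mul_add, phi0_mul_left, he11, hex1, hex2, he1y1, he1y2, he12,
      mul_zero, add_zero, zero_add]
  have hA2 : e2 k * zv = phi0 k p1 * e2 k + phi0 k p4 * ay1 k + phi0 k p5 * ay2 k := by
    rw [hexp]
    simp only [mul_add, phi0_mul_left, he22, hey1, hey2, he2x1, he2x2, he21,
      mul_zero, add_zero, zero_add]
  have S1 : zv * e1 k = phi0 k p0 * e1 k := by
    calc zv * e1 k = (zv * e1 k) * e1 k := by rw [mul_assoc, he11]
      _ = (e1 k * zv) * e1 k := by rw [hzc]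
      _ = phi0 k p0 * e1 k := by
          rw [hA]
          simp only [add_mul, mul_assoc, he11, hx1e1, hx2e1, mul_zero, add_zero]
  have S2 : zv * e2 k = phi0 k p1 * e2 k := by
    calc zv * e2 k = (zv * e2 k) * e2 k := by rw [mul_assoc, he22]
      _ = (e2 k * zv) * e2 k := by rw [hzc]
      _ = phi0 k p1 * e2 k := by
          rw [hA2]
          simp only [add_mul, mul_assoc, he22, hy1e2, hy2e2, mul_zero, add_zero]
  have hzw : zv = phi0 k p0 * e1 k + phi0 k p1 * e2 k := by
    calc zv = zv * (e1 k + e2 k) := by rw [hsum, mul_one]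
      _ = _ := by rw [mul_add, S1, S2]
  -- commuting with `ax1` identifies the two coefficients
  have S3 : phi0 k (p0 - p1) * ax1 k = 0 := by
    have h := hzc (ax1 k)
    rw [hzw] at h
    -- h : ax1 * (c0 e1 + c1 e2) = (c0 e1 + c1 e2) * ax1
    rw [mul_add, phi0_mul_left, phi0_mul_left, hx1e1, hx1e, mul_zero, zero_add,
      add_mul, mul_assoc, mul_assoc, hex1, he2x1, mul_zero, add_zero] at h
    rw [map_sub, sub_mul, sub_eq_zero]
    exact h.symm
  have hS : Segre k (p0 - p1) = 0 := Segre_eq_zero_of_phi0_mul_x1 k S3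
  have hc : phi0 k p0 = phi0 k p1 := by
    have := phi0_span k (H1 k hS)
    rw [map_sub, sub_eq_zero] at this
    exact this
  have hz0 : zv = phi0 k p0 := by
    rw [hzw, ← hc, ← mul_add, hsum, mul_one]
  refine ⟨Ideal.Quotient.mk _ p0, ?_⟩
  rw [phibar_mk]
  apply Subtype.ext
  rw [← phi0_eq_val, ← hz0]

theorem stmt12' :
    Nonempty (Subalgebra.center k (A k) ≃ₐ[k]
      (MvPolynomial (Fin 4) k ⧸
        Ideal.span {(MvPolynomial.X 0 * MvPolynomial.X 1 -
          MvPolynomial.X 2 * MvPolynomial.X 3 : MvPolynomial (Fin 4) k)})) :=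
  ⟨(AlgEquiv.ofBijective (phibar k) ⟨phibar_injective k, phibar_surjective k⟩).symm⟩

/-- The center of the conifold quiver algebra
`A = kQ/∂W` (quiver with two vertices, arrows `x1, x2 : 2 → 1`, `y1, y2 : 1 → 2`,
superpotential `W = y1 x2 y2 x1 − y2 x2 y1 x1`) is isomorphic to
`k[a,b,c,d]/(ab − cd)`. -/
theorem stmt12 :
    Nonempty (Subalgebra.center k (A k) ≃ₐ[k]
      (MvPolynomial (Fin 4) k ⧸
        Ideal.span {(MvPolynomial.X 0 * MvPolynomial.X 1 -
          MvPolynomial.X 2 * MvPolynomial.X 3 : MvPolynomial (Fin 4) k)})) :=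
  stmt12' k

end Stmt12
end

section
/- Let Z be a commutative ring, A an associative Z-algebra which as a Z-module decomposes as A = ⊕_{i,j ∈ I} e_j A e_i for a finite complete set of orthogonal idempotents {e_i}. Fix k ∈ I and suppose that for all i, j ∈ I the natural map e_j A e_i → Hom_Z(e_i A e_k, e_j A e_k), d ↦ (a ↦ da), is an isomorphism of Z-modules. Then A is isomorphic as a Z-algebra to End_Z(A e_k). -/
section Stmt17

variable {Z A I : Type*} [CommRing Z] [Ring A] [Algebra Z A]

/-- The `Z`-submodule `e_j A e_i` of `A`. -/
def cornerPiece (e : I → A) (i j : I) : Submodule Z A where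
  carrier := {x | e j * x * e i = x}
  add_mem' := by
    intro a b ha hb
    simp only [Set.mem_setOf_eq] at *
    rw [mul_add, add_mul, ha, hb]
  zero_mem' := by simp
  smul_mem' := by
    intro z x hx
    simp only [Set.mem_setOf_eq] at *
    rw [mul_smul_comm, smul_mul_assoc, hx]

/-- The `Z`-submodule `A e_k` of `A`. -/
def colPiece (e : I → A) (k : I) : Submodule Z A where
  carrier := {x | x * e k = x}
  add_mem' := by
    intro a b ha hb
    simp only [Set.mem_setOf_eq] at *
    rw [add_mul, ha, hb]
  zero_mem' := by simp
  smul_mem' := by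
    intro z x hx
    simp only [Set.mem_setOf_eq] at *
    rw [smul_mul_assoc, hx]

theorem corner_mem' {e : I → A} (hidem : ∀ i, IsIdempotentElem (e i)) (a : A) (i j : I) :
    e j * a * e i ∈ cornerPiece (Z := Z) e i j := by
  show e j * (e j * a * e i) * e i = e j * a * e i
  have h1 : e j * (e j * a * e i) * e i = (e j * e j) * a * (e i * e i) := by noncomm_ring
  rw [h1, (hidem j).eq, (hidem i).eq]

theorem corner_left {e : I → A} (hidem : ∀ i, IsIdempotentElem (e i)) {i j : I} {a : A}
    (ha : a ∈ cornerPiece (Z := Z) e i j) : e j * a = a := by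
  have ha' : e j * a * e i = a := ha
  conv_lhs => rw [← ha']
  have h1 : e j * (e j * a * e i) = (e j * e j) * a * e i := by noncomm_ring
  rw [h1, (hidem j).eq, ha']

theorem corner_right {e : I → A} (hidem : ∀ i, IsIdempotentElem (e i)) {i j : I} {a : A}
    (ha : a ∈ cornerPiece (Z := Z) e i j) : a * e i = a := by
  have ha' : e j * a * e i = a := ha
  conv_lhs => rw [← ha']
  have h1 : (e j * a * e i) * e i = e j * a * (e i * e i) := by noncomm_ring
  rw [h1, (hidem i).eq, ha']

theorem corner_le_col {e : I → A} (hidem : ∀ i, IsIdempotentElem (e i)) {k i : I} :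
    cornerPiece (Z := Z) e k i ≤ colPiece (Z := Z) e k := by
  intro a ha
  exact corner_right hidem ha

/-- Let `Z` be a commutative ring and `A` an associative `Z`-algebra
with a finite complete set of orthogonal idempotents `{e i}` (so that `A = ⊕_{i,j} e_j A
e_i` as a `Z`-module).  Fix `k`, and suppose for all `i, j` the natural map
`e_j A e_i → Hom_Z(e_i A e_k, e_j A e_k)`, `d ↦ (a ↦ d a)`, is an isomorphism of
`Z`-modules (stated below as injectivity and surjectivity of left multiplication).  Then
`A` is isomorphic as a `Z`-algebra to `End_Z(A e_k)`. -/
theorem stmt17 [Fintype I]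
    (e : I → A)
    (hidem : ∀ i, IsIdempotentElem (e i))
    (horth : ∀ i j, i ≠ j → e i * e j = 0)
    (hsum : ∑ i, e i = 1)
    (k : I)
    -- injectivity of `d ↦ (a ↦ d a)` on `e_j A e_i`:
    (hinj : ∀ i j : I, ∀ d d' : A, d ∈ cornerPiece (Z := Z) e i j →
      d' ∈ cornerPiece (Z := Z) e i j →
      (∀ a ∈ cornerPiece (Z := Z) e k i, d * a = d' * a) → d = d')
    -- surjectivity: every `Z`-linear map `e_i A e_k → e_j A e_k` is left multiplication
    -- by some `d ∈ e_j A e_i`: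
    (hsurj : ∀ i j : I,
      ∀ f : (cornerPiece (Z := Z) e k i) →ₗ[Z] (cornerPiece (Z := Z) e k j),
      ∃ d ∈ cornerPiece (Z := Z) e i j,
        ∀ a : (cornerPiece (Z := Z) e k i), (f a : A) = d * (a : A)) :
    Nonempty (A ≃ₐ[Z] Module.End Z (colPiece (Z := Z) e k)) := by
  classical
  have memCol : ∀ (a : A) (x : colPiece (Z := Z) e k),
      a * (x : A) ∈ colPiece (Z := Z) e k := by
    intro a x
    have hx : (x : A) * e k = (x : A) := x.2
    show (a * (x : A)) * e k = a * (x : A)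
    rw [mul_assoc, hx]
  -- left multiplication as a ring hom into the endomorphisms
  let Lfun : A → Module.End Z (colPiece (Z := Z) e k) := fun a =>
    { toFun := fun x => ⟨a * x, memCol a x⟩
      map_add' := fun x y => by ext; simp [mul_add]
      map_smul' := fun z x => by ext; simp [mul_smul_comm] }
  have Lfun_apply : ∀ (a : A) (x : colPiece (Z := Z) e k),
      ((Lfun a) x : A) = a * x := fun _ _ => rfl
  let Lrh : A →+* Module.End Z (colPiece (Z := Z) e k) :=
    { toFun := Lfun
      map_one' := by ext x; simp [Lfun]
      map_mul' := fun a b => by ext x; simp [Lfun, mul_assoc]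
      map_zero' := by ext x; simp [Lfun]
      map_add' := fun a b => by ext x; simp [Lfun, add_mul] }
  let L : A →ₐ[Z] Module.End Z (colPiece (Z := Z) e k) :=
    AlgHom.mk' Lrh (by
      intro c a
      ext x
      show (c • a) * (x : A) = c • (a * (x : A))
      rw [smul_mul_assoc])
  have L_apply : ∀ (a : A) (x : colPiece (Z := Z) e k),
      ((L a) x : A) = a * x := fun _ _ => rfl
  -- decomposition of any element
  have expand : ∀ a : A, ∑ j, ∑ i, e j * a * e i = a := by
    intro a
    calc ∑ j, ∑ i, e j * a * e i = (∑ j, e j) * a * (∑ i, e i) := by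
          simp only [Finset.sum_mul, Finset.mul_sum]
          exact Finset.sum_comm ..
      _ = a := by rw [hsum, one_mul, mul_one]
  -- injectivity of L
  have hL_inj : Function.Injective L := by
    intro a b hab
    have h : ∀ x ∈ colPiece (Z := Z) e k, a * x = b * x := by
      intro x hx
      have := congrArg (fun g : Module.End Z (colPiece (Z := Z) e k) =>
        ((g ⟨x, hx⟩ : colPiece (Z := Z) e k) : A)) hab
      simpa [L_apply] using this
    have key : ∀ i j, e j * a * e i = e j * b * e i := by
      intro i j
      refine hinj i j _ _ (corner_mem' hidem a i j) (corner_mem' hidem b i j) ?_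
      intro c hc
      have hc1 : e i * c = c := corner_left hidem hc
      have hc2 : c ∈ colPiece (Z := Z) e k := corner_le_col hidem hc
      calc (e j * a * e i) * c = e j * (a * c) := by rw [mul_assoc, mul_assoc, hc1]
        _ = e j * (b * c) := by rw [h c hc2]
        _ = (e j * b * e i) * c := by rw [mul_assoc, mul_assoc, hc1]
    calc a = ∑ j, ∑ i, e j * a * e i := (expand a).symm
      _ = ∑ j, ∑ i, e j * b * e i := by
          exact Finset.sum_congr rfl fun j _ => Finset.sum_congr rfl fun i _ => key i j
      _ = b := expand b
  -- surjectivity of L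
  have hL_surj : Function.Surjective L := by
    intro f
    let ι : ∀ i, (cornerPiece (Z := Z) e k i) →ₗ[Z] (colPiece (Z := Z) e k) :=
      fun i => Submodule.inclusion (corner_le_col hidem)
    have memπ : ∀ (j : I) (y : colPiece (Z := Z) e k),
        e j * (y : A) ∈ cornerPiece (Z := Z) e k j := by
      intro j y
      show e j * (e j * (y : A)) * e k = e j * (y : A)
      have hy : (y : A) * e k = (y : A) := y.2
      rw [← mul_assoc, (hidem j).eq, mul_assoc, hy]
    let π : ∀ j, (colPiece (Z := Z) e k) →ₗ[Z] (cornerPiece (Z := Z) e k j) :=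
      fun j =>
      { toFun := fun y => ⟨e j * y, memπ j y⟩
        map_add' := fun x y => by ext; simp [mul_add]
        map_smul' := fun z x => by ext; simp [mul_smul_comm] }
    choose d hdmem hdspec using fun i j : I => hsurj i j ((π j) ∘ₗ f ∘ₗ (ι i))
    refine ⟨∑ j, ∑ i, d i j, ?_⟩
    apply LinearMap.ext
    intro x
    apply Subtype.ext
    have hx : (x : A) * e k = (x : A) := x.2
    have memx : ∀ i, e i * (x : A) ∈ cornerPiece (Z := Z) e k i := fun i => memπ i x
    set g : I → colPiece (Z := Z) e k := fun i => ι i ⟨e i * (x : A), memx i⟩ with hg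
    have hgval : ∀ i, (g i : A) = e i * (x : A) := fun i => rfl
    have hsumg : ∑ i, g i = x := by
      apply Subtype.ext
      push_cast [hgval]
      rw [← Finset.sum_mul, hsum, one_mul]
    have step : ∀ i j, d i j * (x : A) = e j * ((f (g i)) : A) := by
      intro i j
      have h1 : d i j * e i = d i j := corner_right hidem (hdmem i j)
      have h2 := hdspec i j ⟨e i * (x : A), memx i⟩
      -- h2 : ((π j) (f (ι i ⟨e i * x, _⟩)) : A) = d i j * (e i * x)
      have h3 : ((π j) (f (g i)) : A) = e j * ((f (g i)) : A) := rfl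
      calc d i j * (x : A) = (d i j * e i) * (x : A) := by rw [h1]
        _ = d i j * (e i * (x : A)) := by rw [mul_assoc]
        _ = e j * ((f (g i)) : A) := by rw [← h2]; rfl
    show (∑ j, ∑ i, d i j) * (x : A) = ((f x) : A)
    calc (∑ j, ∑ i, d i j) * (x : A) = ∑ j, ∑ i, d i j * (x : A) := by
          simp only [Finset.sum_mul]
      _ = ∑ i, ∑ j, d i j * (x : A) := Finset.sum_comm
      _ = ∑ i, ∑ j, e j * ((f (g i)) : A) := by
          exact Finset.sum_congr rfl fun i _ => Finset.sum_congr rfl fun j _ => step i j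
      _ = ∑ i, ((f (g i)) : A) := by
          refine Finset.sum_congr rfl fun i _ => ?_
          rw [← Finset.sum_mul, hsum, one_mul]
      _ = ((f x) : A) := by
          rw [← hsumg, map_sum]
          push_cast
          rfl
  exact ⟨AlgEquiv.ofBijective L ⟨hL_inj, hL_surj⟩⟩

end Stmt17
end
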